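/- Closure under pointwise convergence: Let d ≥ 1, λ ∈ (0,1), and fix gauge functions η_1,…,η_{2d}. For each k ∈ ℕ let F_k : ℝ^{2d} → ℝ be a weak averaging operator with ellipticity constant λ and gauge functions η_1,…,η_{2d}, and let u_k : ℤ^d → ℝ be nonnegative, F_k-harmonic, with u_k(0,…,0) = 1. If u_k(x) → u(x) as k → ∞ for every x ∈ ℤ^d, then u is nonnegative, u(0,…,0) = 1, and u is F-harmonic for some weak averaging operator F with ellipticity constant λ and gauge functions η_1,…,η_{2d}. -/

import Mathlib

/-- The `2d` lattice directions on `ℤ^d`: for `j < d` this is the standard basis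
vector `e_j`, and for `d ≤ j < 2d` it is `-e_{j-d}`. -/
def nbr (d : ℕ) (j : Fin (2 * d)) : Fin d → ℤ :=
  fun i => if (j : ℕ) = (i : ℕ) then 1 else if (j : ℕ) = (i : ℕ) + d then -1 else 0

/-- `u : ℤ^d → ℝ` is `F`-harmonic if `u x = F (u (x+e_1), …, u (x+e_{2d}))` for all `x`. -/
def IsFHarmonic (d : ℕ) (F : (Fin (2 * d) → ℝ) → ℝ) (u : (Fin d → ℤ) → ℝ) : Prop :=
  ∀ x : Fin d → ℤ, u x = F fun j => u fun i => x i + nbr d j i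

/-- A weak (isotropic) averaging operator with ellipticity constant `lam` and
gauge functions `η`. -/
structure IsWeakAvgOp (d : ℕ) (lam : ℝ) (η : Fin (2 * d) → ℝ → ℝ)
    (F : (Fin (2 * d) → ℝ) → ℝ) : Prop where
  map_zero : F (fun _ => 0) = 0
  map_one : F (fun _ => 1) = 1
  continuous : Continuous F
  mono : ∀ (t : Fin (2 * d) → ℝ) (i : Fin (2 * d)) (s : ℝ),
    t i ≤ s → F t ≤ F (Function.update t i s)
  add_const : ∀ (t : Fin (2 * d) → ℝ) (c : ℝ), F (fun i => t i + c) = c + F t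
  homog : ∀ (t : Fin (2 * d) → ℝ) (c : ℝ), F (fun i => c * t i) = c * F t
  perm : ∀ (t : Fin (2 * d) → ℝ) (σ : Equiv.Perm (Fin (2 * d))), F (t ∘ σ) = F t
  ellip : ∀ k : Fin (2 * d), lam ≤ F fun i => if i = k then 1 else 0
  gauge_cont : ∀ i, ContinuousOn (η i) (Set.Ici 0)
  gauge_mono : ∀ i, MonotoneOn (η i) (Set.Ici 0)
  gauge_zero : ∀ i, η i 0 = 0
  gauge_nonneg : ∀ i s, 0 ≤ s → 0 ≤ η i s
  gauge_bound : ∀ (t : Fin (2 * d) → ℝ) (i : Fin (2 * d)) (s : ℝ),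
    |F t - F (Function.update t i s)| ≤ η i |t i - s|

open Filter Topology

private lemma monotone_of_update {n : ℕ} {F : (Fin n → ℝ) → ℝ}
    (h : ∀ (t : Fin n → ℝ) (i : Fin n) (s : ℝ), t i ≤ s → F t ≤ F (Function.update t i s)) :
    Monotone F := by
  intro t t' htt'
  have key : ∀ s : Finset (Fin n), F t ≤ F (fun i => if i ∈ s then t' i else t i) := by
    intro s
    induction s using Finset.induction_on with
    | empty => simp
    | insert a s ha ih =>
      calc F t ≤ F (fun i => if i ∈ s then t' i else t i) := ih
        _ ≤ F (Function.update (fun i => if i ∈ s then t' i else t i) a (t' a)) := by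
            apply h
            simp only [if_neg ha]
            exact htt' a
        _ = F (fun i => if i ∈ insert a s then t' i else t i) := by
            congr 1
            funext i
            rcases eq_or_ne i a with rfl | hia
            · simp [Function.update]
            · simp [Function.update, hia]
  simpa using key Finset.univ

private lemma lip_of_ops {n : ℕ} {F : (Fin n → ℝ) → ℝ} (hmono : Monotone F)
    (haddc : ∀ (t : Fin n → ℝ) (c : ℝ), F (fun i => t i + c) = c + F t)
    (t s : Fin n → ℝ) : |F t - F s| ≤ dist t s := by
  have key : ∀ a b : Fin n → ℝ, F a - F b ≤ dist a b := by
    intro a b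
    have h1 : F a ≤ F (fun i => b i + dist a b) := by
      apply hmono
      intro i
      have h2 := dist_le_pi_dist a b i
      rw [Real.dist_eq] at h2
      have h3 := abs_le.mp h2
      show a i ≤ b i + dist a b
      linarith [h3.1, h3.2]
    rw [haddc] at h1
    linarith
  have h1 := key t s
  have h2 := key s t
  rw [dist_comm s t] at h2
  exact abs_sub_le_iff.mpr ⟨h1, h2⟩

private lemma exists_ulim (φ : Ultrafilter ℕ) {g : ℕ → ℝ} {M : ℝ} (hb : ∀ k, |g k| ≤ M) :
    ∃ a, Filter.Tendsto g (φ : Filter ℕ) (nhds a) := by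
  have hmem : Set.Icc (-M) M ∈ Filter.map g (φ : Filter ℕ) := by
    refine Filter.mem_map.mpr (Filter.univ_mem' ?_)
    intro k
    exact Set.mem_Icc.mpr (abs_le.mp (hb k))
  obtain ⟨a, -, ha⟩ := isCompact_Icc.ultrafilter_le_nhds (φ.map g) (le_principal_iff.mpr hmem)
  exact ⟨a, ha⟩

/-- Closure of the class `P_λ` under pointwise convergence. -/
theorem closed_under_pointwise_limits (d : ℕ) (hd : 0 < d) (lam : ℝ) (hlam0 : 0 < lam)
    (hlam1 : lam < 1) (η : Fin (2 * d) → ℝ → ℝ)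
    (Fseq : ℕ → (Fin (2 * d) → ℝ) → ℝ) (useq : ℕ → (Fin d → ℤ) → ℝ)
    (hFseq : ∀ k, IsWeakAvgOp d lam η (Fseq k))
    (hpos : ∀ k x, 0 ≤ useq k x) (hnorm : ∀ k, useq k (fun _ => 0) = 1)
    (hharm : ∀ k, IsFHarmonic d (Fseq k) (useq k))
    (u : (Fin d → ℤ) → ℝ)
    (hconv : ∀ x, Filter.Tendsto (fun k => useq k x) Filter.atTop (nhds (u x))) :
    (∀ x, 0 ≤ u x) ∧ u (fun _ => 0) = 1 ∧
      ∃ F, IsWeakAvgOp d lam η F ∧ IsFHarmonic d F u := by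
  have hu0 : ∀ x, 0 ≤ u x := fun x =>
    ge_of_tendsto (hconv x) (Filter.Eventually.of_forall fun k => hpos k x)
  have hu1 : u (fun _ => 0) = 1 := by
    have h1 : Filter.Tendsto (fun k => useq k (fun _ => 0)) Filter.atTop (nhds 1) := by
      have : (fun k => useq k (fun _ => 0)) = fun _ => (1 : ℝ) := funext hnorm
      rw [this]; exact tendsto_const_nhds
    exact tendsto_nhds_unique (hconv _) h1
  -- basic facts about each Fseq k
  have hmonoK : ∀ k, Monotone (Fseq k) := fun k => monotone_of_update (hFseq k).mono
  have hlipK : ∀ k t s, |Fseq k t - Fseq k s| ≤ dist t s :=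
    fun k => lip_of_ops (hmonoK k) (hFseq k).add_const
  have hboundK : ∀ k t, |Fseq k t| ≤ dist t (fun _ => 0) := by
    intro k t
    have h := hlipK k t (fun _ => 0)
    rwa [(hFseq k).map_zero, sub_zero] at h
  -- the ultrafilter
  let φ : Ultrafilter ℕ := Ultrafilter.of Filter.atTop
  have hφle : (φ : Filter ℕ) ≤ Filter.atTop := Ultrafilter.of_le Filter.atTop
  have hex : ∀ t, ∃ a, Filter.Tendsto (fun k => Fseq k t) (φ : Filter ℕ) (nhds a) :=
    fun t => exists_ulim φ (fun k => hboundK k t)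
  set F : (Fin (2 * d) → ℝ) → ℝ := fun t => (hex t).choose with hFdef
  have hF : ∀ t, Filter.Tendsto (fun k => Fseq k t) (φ : Filter ℕ) (nhds (F t)) :=
    fun t => (hex t).choose_spec
  -- Lipschitz bound for F
  have hlipF : ∀ t s, |F t - F s| ≤ dist t s := by
    intro t s
    exact le_of_tendsto ((hF t).sub (hF s)).abs
      (Filter.Eventually.of_forall fun k => hlipK k t s)
  have hop : IsWeakAvgOp d lam η F := by
    constructor
    · -- map_zero
      refine tendsto_nhds_unique (hF _) ?_
      have : (fun k => Fseq k (fun _ => 0)) = fun _ => (0 : ℝ) :=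
        funext fun k => (hFseq k).map_zero
      rw [this]; exact tendsto_const_nhds
    · -- map_one
      refine tendsto_nhds_unique (hF _) ?_
      have : (fun k => Fseq k (fun _ => 1)) = fun _ => (1 : ℝ) :=
        funext fun k => (hFseq k).map_one
      rw [this]; exact tendsto_const_nhds
    · -- continuous
      have : LipschitzWith 1 F := by
        apply LipschitzWith.of_dist_le_mul
        intro t s
        rw [Real.dist_eq, NNReal.coe_one, one_mul]
        exact hlipF t s
      exact this.continuous
    · -- mono
      intro t i s hts
      exact le_of_tendsto_of_tendsto' (hF t) (hF _) fun k => (hFseq k).mono t i s hts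
    · -- add_const
      intro t c
      refine tendsto_nhds_unique (hF _) ?_
      have : (fun k => Fseq k (fun i => t i + c)) = fun k => c + Fseq k t :=
        funext fun k => (hFseq k).add_const t c
      rw [this]
      exact (hF t).const_add c
    · -- homog
      intro t c
      refine tendsto_nhds_unique (hF _) ?_
      have : (fun k => Fseq k (fun i => c * t i)) = fun k => c * Fseq k t :=
        funext fun k => (hFseq k).homog t c
      rw [this]
      exact (hF t).const_mul c
    · -- perm
      intro t σ
      refine tendsto_nhds_unique (hF _) ?_
      have : (fun k => Fseq k (t ∘ σ)) = fun k => Fseq k t :=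
        funext fun k => (hFseq k).perm t σ
      rw [this]
      exact hF t
    · -- ellip
      intro j
      exact ge_of_tendsto (hF _) (Filter.Eventually.of_forall fun k => (hFseq k).ellip j)
    · exact (hFseq 0).gauge_cont
    · exact (hFseq 0).gauge_mono
    · exact (hFseq 0).gauge_zero
    · exact (hFseq 0).gauge_nonneg
    · -- gauge_bound
      intro t i s
      exact le_of_tendsto ((hF t).sub (hF _)).abs
        (Filter.Eventually.of_forall fun k => (hFseq k).gauge_bound t i s)
  refine ⟨hu0, hu1, F, hop, ?_⟩
  intro x
  set v : Fin (2 * d) → ℝ := fun j => u fun i => x i + nbr d j i with hv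
  set vk : ℕ → Fin (2 * d) → ℝ := fun k j => useq k fun i => x i + nbr d j i with hvk
  have hvconv : Filter.Tendsto vk Filter.atTop (nhds v) :=
    tendsto_pi_nhds.mpr fun j => hconv _
  have hdist : Filter.Tendsto (fun k => dist (vk k) v) Filter.atTop (nhds 0) := by
    have := hvconv.dist (tendsto_const_nhds (x := v))
    simpa using this
  have habs : Filter.Tendsto (fun k => |Fseq k (vk k) - Fseq k v|) Filter.atTop (nhds 0) :=
    squeeze_zero (fun k => abs_nonneg _) (fun k => hlipK k _ _) hdist
  have h2 : Filter.Tendsto (fun k => Fseq k (vk k) - Fseq k v) Filter.atTop (nhds 0) := by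
    rw [tendsto_zero_iff_norm_tendsto_zero]
    simpa [Real.norm_eq_abs] using habs
  have h1 : Filter.Tendsto (fun k => Fseq k (vk k)) Filter.atTop (nhds (u x)) := by
    have : (fun k => useq k x) = fun k => Fseq k (vk k) := funext fun k => hharm k x
    rw [← this]
    exact hconv x
  have h3 : Filter.Tendsto (fun k => Fseq k v) Filter.atTop (nhds (u x)) := by
    have := h1.sub h2
    simpa using this
  exact tendsto_nhds_unique (h3.mono_left hφle) (hF v)
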